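/- For every 1 < r < ∞, 1 < p < ∞, every ergodic measure-preserving transformation τ of a probability space (X, μ), and every sequence (f_j) of measurable functions on X: ‖(∑_j (M♯ f_j)^r)^{1/r}‖_{L^p(X,μ)} ≤ C_{r,p} ‖(∑_j |f_j|^r)^{1/r}‖_{L^p(X,μ)}, where C_{r,p} is the constant in the Fefferman–Stein vector-valued maximal inequality on ℝ. -/

import Mathlib

open MeasureTheory ENNReal

/-- The ergodic maximal function. -/
noncomputable def ergMax {X : Type*} (τ : X → X) (f : X → ℝ) (x : X) : ℝ≥0∞ :=
  ⨆ n : ℕ, (∑ k ∈ Finset.range (n + 1), ENNReal.ofReal |f (τ^[k] x)|) / (n + 1)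

/-- The Hardy–Littlewood maximal function on `ℝ`. -/
noncomputable def hlMax (f : ℝ → ℝ) (t : ℝ) : ℝ≥0∞ :=
  ⨆ (a : ℝ) (b : ℝ) (_ : a ≤ t) (_ : t ≤ b) (_ : a < b),
    (∫⁻ y in Set.Icc a b, ENNReal.ofReal |f y|) / ENNReal.ofReal (b - a)

noncomputable def eAvg {X : Type*} (τ : X → X) (f : X → ℝ) (n : ℕ) (x : X) : ℝ≥0∞ :=
  (∑ k ∈ Finset.range (n + 1), ENNReal.ofReal |f (τ^[k] x)|) / (n + 1)

noncomputable def eTr {X : Type*} (τ : X → X) (f : X → ℝ) (m : ℕ) (x : X) : ℝ≥0∞ :=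
  ⨆ n ∈ Finset.range (m + 1), eAvg τ f n x

lemma eTr_mono {X : Type*} (τ : X → X) (f : X → ℝ) (x : X) :
    Monotone fun m => eTr τ f m x := by
  intro a b hab
  exact iSup₂_le fun n hn => le_iSup₂_of_le n
    (Finset.mem_range.mpr (lt_of_lt_of_le (Finset.mem_range.mp hn) (by omega))) le_rfl

lemma iSup_eTr {X : Type*} (τ : X → X) (f : X → ℝ) (x : X) :
    ⨆ m, eTr τ f m x = ergMax τ f x := by
  apply le_antisymm
  · exact iSup_le fun m => iSup₂_le fun n _ => le_iSup (fun n => eAvg τ f n x) n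
  · exact iSup_le fun n => le_iSup_of_le n
      (le_iSup₂_of_le n (Finset.mem_range.mpr (by omega)) le_rfl)

lemma eAvg_measurable {X : Type*} [MeasurableSpace X] {τ : X → X} (hτ : Measurable τ)
    {f : X → ℝ} (hf : Measurable f) (n : ℕ) : Measurable (eAvg τ f n) := by
  apply Measurable.div _ measurable_const
  exact Finset.measurable_sum _ fun k _ =>
    ENNReal.measurable_ofReal.comp ((hf.comp (hτ.iterate k)).abs)

lemma eTr_measurable {X : Type*} [MeasurableSpace X] {τ : X → X} (hτ : Measurable τ)
    {f : X → ℝ} (hf : Measurable f) (m : ℕ) : Measurable (eTr τ f m) :=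
  Measurable.iSup fun n => Measurable.iSup fun _ => eAvg_measurable hτ hf n

/-- monotone sup commutes with rpow -/
lemma iSup_rpow_mono (u : ℕ → ℝ≥0∞) (hu : Monotone u) {c : ℝ} (hc : 0 < c) :
    (⨆ n, u n) ^ c = ⨆ n, u n ^ c := by
  have h1 : Filter.Tendsto u Filter.atTop (nhds (⨆ n, u n)) := tendsto_atTop_iSup hu
  have h2 : Filter.Tendsto (fun n => u n ^ c) Filter.atTop (nhds ((⨆ n, u n) ^ c)) :=
    (ENNReal.continuous_rpow_const.tendsto _).comp h1
  have h3 : Filter.Tendsto (fun n => u n ^ c) Filter.atTop (nhds (⨆ n, u n ^ c)) :=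
    tendsto_atTop_iSup fun a b hab => ENNReal.rpow_le_rpow (hu hab) hc.le
  exact tendsto_nhds_unique h2 h3

/-- monotone sup commutes with tsum -/
lemma tsum_iSup_mono (a : ℕ → ℕ → ℝ≥0∞) (ha : ∀ j, Monotone fun m => a m j) :
    ∑' j, ⨆ m, a m j = ⨆ m, ∑' j, a m j := by
  have h1 : ∀ m : ℕ, ∑' j, a m j = ∫⁻ j, a m j ∂Measure.count := fun m => (lintegral_count _).symm
  have h2 : ∑' j, ⨆ m, a m j = ∫⁻ j, ⨆ m, a m j ∂Measure.count := (lintegral_count _).symm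
  rw [h2, lintegral_iSup (fun m => measurable_from_nat) (fun m m' h j => ha j h)]
  simp_rw [h1]

def indI (i : ℕ) : Set ℝ := Set.Ico (i : ℝ) ((i : ℝ) + 1)

lemma indI_meas (i : ℕ) : MeasurableSet (indI i) := measurableSet_Ico

lemma volume_indI (i : ℕ) : volume (indI i) = 1 := by
  simp [indI, Real.volume_Ico]

lemma indI_unique {t : ℝ} {i i' : ℕ} (h : t ∈ indI i) (h' : t ∈ indI i') : i = i' := by
  obtain ⟨h1, h2⟩ := h; obtain ⟨h3, h4⟩ := h'
  have a1 : (i : ℝ) < (i' : ℝ) + 1 := lt_of_le_of_lt h1 h4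
  have a2 : (i' : ℝ) < (i : ℝ) + 1 := lt_of_le_of_lt h3 h2
  have b1 : (i : ℕ) < i' + 1 := by exact_mod_cast a1
  have b2 : (i' : ℕ) < i + 1 := by exact_mod_cast a2
  omega

lemma mem_indI_floor {t : ℝ} (h : 0 ≤ t) : t ∈ indI ⌊t⌋₊ :=
  ⟨Nat.floor_le h, Nat.lt_floor_add_one t⟩

lemma floor_eq_of_mem {t : ℝ} {i : ℕ} (h : t ∈ indI i) : ⌊t⌋₊ = i := by
  have h0 : (0 : ℝ) ≤ t := le_trans (by positivity) h.1
  exact indI_unique (mem_indI_floor h0) h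

lemma indSum_le {s : Finset ℕ} {σ : ℕ → ℕ} (hσ : ∀ a b, σ a = σ b → a = b)
    (v : ℕ → ℝ≥0∞) (w : ℝ → ℝ≥0∞)
    (hvw : ∀ i ∈ s, ∀ t ∈ indI (σ i), v i ≤ w t) (t : ℝ) :
    ∑ i ∈ s, (indI (σ i)).indicator (fun _ => v i) t ≤ w t := by
  by_cases hex : ∃ i ∈ s, t ∈ indI (σ i)
  · obtain ⟨i, his, hti⟩ := hex
    rw [Finset.sum_eq_single_of_mem i his]
    · rw [Set.indicator_of_mem hti]; exact hvw i his t hti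
    · intro b hb hbi
      exact Set.indicator_of_notMem (fun hb' => hbi (hσ b i (indI_unique hb' hti))) _
  · rw [Finset.sum_eq_zero fun i hi =>
      Set.indicator_of_notMem (fun ht => hex ⟨i, hi, ht⟩) _]
    exact zero_le

noncomputable def gFun {X : Type*} (τ : X → X) (f : X → ℝ) (N : ℕ) (x : X) : ℝ → ℝ :=
  (Set.Ico (0 : ℝ) (N : ℝ)).indicator fun t => f (τ^[⌊t⌋₊] x)

lemma gFun_measurable {X : Type*} (τ : X → X) (f : X → ℝ) (N : ℕ) (x : X) :
    Measurable (gFun τ f N x) :=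
  Measurable.indicator ((measurable_from_nat (f := fun n => f (τ^[n] x))).comp Nat.measurable_floor) measurableSet_Ico

lemma gFun_val {X : Type*} (τ : X → X) (f : X → ℝ) {N k : ℕ} (x : X) {t : ℝ}
    (ht : t ∈ indI k) (hkN : k < N) : gFun τ f N x t = f (τ^[k] x) := by
  have h0 : (0 : ℝ) ≤ t := le_trans (by positivity) ht.1
  have h1 : t < (N : ℝ) := by
    refine lt_of_lt_of_le ht.2 ?_
    have : (k : ℝ) + 1 ≤ (N : ℝ) := by exact_mod_cast Nat.succ_le_of_lt hkN
    linarith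
  rw [gFun, Set.indicator_of_mem (Set.mem_Ico.mpr ⟨h0, h1⟩), floor_eq_of_mem ht]

lemma gFun_zero {X : Type*} (τ : X → X) (f : X → ℝ) {N : ℕ} (x : X) {t : ℝ}
    (ht : t ∉ Set.Ico (0 : ℝ) (N : ℝ)) : gFun τ f N x t = 0 :=
  Set.indicator_of_notMem ht _


lemma hlMax_ge (g : ℝ → ℝ) {t a b : ℝ} (hat : a ≤ t) (htb : t ≤ b) (hab : a < b) :
    (∫⁻ y in Set.Icc a b, ENNReal.ofReal |g y|) / ENNReal.ofReal (b - a) ≤ hlMax g t :=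
  le_iSup_of_le a (le_iSup_of_le b (le_iSup_of_le hat (le_iSup_of_le htb
    (le_iSup_of_le hab le_rfl))))

lemma sum_indicator_lintegral {s : Finset ℕ} {σ : ℕ → ℕ} (v : ℕ → ℝ≥0∞) {A : Set ℝ}
    (hA : MeasurableSet A) (hsub : ∀ i ∈ s, indI (σ i) ⊆ A) :
    ∫⁻ t in A, ∑ i ∈ s, (indI (σ i)).indicator (fun _ => v i) t = ∑ i ∈ s, v i := by
  rw [lintegral_finset_sum s (fun i _ => measurable_const.indicator (indI_meas _))]
  refine Finset.sum_congr rfl fun i hi => ?_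
  rw [lintegral_indicator_const (indI_meas _), Measure.restrict_apply (indI_meas _),
    Set.inter_eq_self_of_subset_left (hsub i hi), volume_indI, mul_one]

lemma avg_le_hlMax {X : Type*} (τ : X → X) (f : X → ℝ) {N k n : ℕ} (x : X)
    (hkn : k + n + 1 ≤ N) {t : ℝ} (ht : t ∈ indI k) :
    eAvg τ f n (τ^[k] x) ≤ hlMax (gFun τ f N x) t := by
  set b : ℝ := (k : ℝ) + (n : ℝ) + 1 with hb
  have hkt : (k : ℝ) ≤ t := ht.1
  have hn0 : (0 : ℝ) ≤ (n : ℝ) := Nat.cast_nonneg n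
  have htb : t ≤ b := le_trans ht.2.le (by rw [hb]; linarith)
  have hab : (k : ℝ) < b := by rw [hb]; linarith
  refine le_trans ?_ (hlMax_ge _ hkt htb hab)
  have hba : b - (k : ℝ) = ((n + 1 : ℕ) : ℝ) := by rw [hb]; push_cast; ring
  have hden : ENNReal.ofReal (b - (k : ℝ)) = ((n : ℝ≥0∞) + 1) := by
    rw [hba, ENNReal.ofReal_natCast]; push_cast; ring
  rw [hden]
  refine ENNReal.div_le_div_right ?_ _
  -- sum ≤ integral over Icc
  have hpt : ∀ y : ℝ,
      (∑ i ∈ Finset.range (n + 1),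
        (indI (k + i)).indicator (fun _ => ENNReal.ofReal |f (τ^[i] (τ^[k] x))|) y)
        ≤ ENNReal.ofReal |gFun τ f N x y| := by
    refine indSum_le (σ := fun i => k + i) (fun a b h => Nat.add_left_cancel h) _ _ ?_
    intro i hi y hy
    have hiN : k + i < N := by have := Finset.mem_range.mp hi; omega
    have hyi : y ∈ indI (k + i) := hy
    show ENNReal.ofReal |f (τ^[i] (τ^[k] x))| ≤ ENNReal.ofReal |gFun τ f N x y|
    rw [gFun_val τ f x hyi hiN, add_comm k i, Function.iterate_add_apply]
  have hsub : ∀ i ∈ Finset.range (n + 1), indI (k + i) ⊆ Set.Icc (k : ℝ) b := by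
    intro i hi y hy
    have hin : (i : ℝ) ≤ (n : ℝ) := by exact_mod_cast Nat.lt_succ_iff.mp (Finset.mem_range.mp hi)
    have h1 : ((k + i : ℕ) : ℝ) ≤ y := hy.1
    have h2 : y < ((k + i : ℕ) : ℝ) + 1 := hy.2
    push_cast at h1 h2
    exact ⟨by linarith, by rw [hb]; linarith⟩
  calc ∑ i ∈ Finset.range (n + 1), ENNReal.ofReal |f (τ^[i] (τ^[k] x))|
      = ∫⁻ y in Set.Icc (k : ℝ) b, ∑ i ∈ Finset.range (n + 1),
          (indI (k + i)).indicator (fun _ => ENNReal.ofReal |f (τ^[i] (τ^[k] x))|) y :=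
        (sum_indicator_lintegral _ measurableSet_Icc hsub).symm
    _ ≤ ∫⁻ y in Set.Icc (k : ℝ) b, ENNReal.ofReal |gFun τ f N x y| :=
        lintegral_mono fun y => hpt y

lemma indSum_le' {s : Finset ℕ} (v : ℕ → ℝ≥0∞) (w : ℝ → ℝ≥0∞)
    (hvw : ∀ i ∈ s, ∀ t ∈ indI i, v i ≤ w t) (t : ℝ) :
    ∑ i ∈ s, (indI i).indicator (fun _ => v i) t ≤ w t := by
  by_cases hex : ∃ i ∈ s, t ∈ indI i
  · obtain ⟨i, his, hti⟩ := hex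
    rw [Finset.sum_eq_single_of_mem i his]
    · rw [Set.indicator_of_mem hti]; exact hvw i his t hti
    · intro b hb hbi
      exact Set.indicator_of_notMem (fun hb' => hbi (indI_unique hb' hti)) _
  · rw [Finset.sum_eq_zero fun i hi =>
      Set.indicator_of_notMem (fun ht => hex ⟨i, hi, ht⟩) _]
    exact zero_le

lemma rpow_root_le {A B c : ℝ≥0∞} {p : ℝ} (hp : 0 < p) (h : A ^ (1 / p) ≤ c * B ^ (1 / p)) :
    A ≤ c ^ p * B := by
  have h2 := ENNReal.rpow_le_rpow h hp.le
  rwa [ENNReal.mul_rpow_of_nonneg _ _ hp.le, ← ENNReal.rpow_mul, ← ENNReal.rpow_mul,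
    one_div_mul_cancel hp.ne', ENNReal.rpow_one, ENNReal.rpow_one] at h2

lemma le_of_mul_le_mul_nat {A K : ℝ≥0∞} {m : ℕ} (hK : K ≠ ∞)
    (h : ∀ N : ℕ, ((N - m : ℕ) : ℝ≥0∞) * A ≤ K * N) : A ≤ K := by
  have hA : A ≠ ∞ := by
    have h1 := h (m + 1)
    rw [Nat.add_sub_cancel_left] at h1
    simp only [Nat.cast_one, one_mul] at h1
    exact ne_top_of_le_ne_top (ENNReal.mul_ne_top hK (ENNReal.natCast_ne_top _)) h1
  set a := A.toReal with ha
  set κ := K.toReal with hκ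
  have hreal : ∀ q : ℕ, 1 ≤ q → a ≤ κ + κ * m / q := by
    intro q hq
    have h1 := h (m + q)
    rw [Nat.add_sub_cancel_left] at h1
    have h2 : ((q : ℝ≥0∞) * A).toReal ≤ (K * ((m : ℕ) + q : ℕ)).toReal :=
      ENNReal.toReal_mono (ENNReal.mul_ne_top hK (ENNReal.natCast_ne_top _)) (by exact_mod_cast h1)
    rw [ENNReal.toReal_mul, ENNReal.toReal_mul] at h2
    simp only [ENNReal.toReal_natCast] at h2
    push_cast at h2
    have hq0 : (0 : ℝ) < (q : ℝ) := by exact_mod_cast hq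
    have h3 : a * q ≤ (κ + κ * m / q) * q := by
      rw [add_mul, div_mul_cancel₀ _ hq0.ne']
      nlinarith [h2]
    exact le_of_mul_le_mul_right h3 hq0
  have hκ0 : a ≤ κ := by
    have tend : Filter.Tendsto (fun q : ℕ => κ + κ * m / q) Filter.atTop (nhds (κ + 0)) :=
      Filter.Tendsto.add tendsto_const_nhds (tendsto_const_div_atTop_nhds_zero_nat _)
    rw [add_zero] at tend
    exact ge_of_tendsto tend (Filter.eventually_atTop.mpr ⟨1, hreal⟩)
  exact (ENNReal.toReal_le_toReal hA hK).mp hκ0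

lemma sum_indicator_lintegral' {s : Finset ℕ} (v : ℕ → ℝ≥0∞) :
    ∫⁻ t, ∑ i ∈ s, (indI i).indicator (fun _ => v i) t = ∑ i ∈ s, v i := by
  rw [lintegral_finset_sum s (fun i _ => measurable_const.indicator (indI_meas _))]
  refine Finset.sum_congr rfl fun i hi => ?_
  rw [lintegral_indicator_const (indI_meas _), volume_indI, mul_one]

theorem ergodic_vector_valued_strong (r p : ℝ) (hr : 1 < r) (hp : 1 < p)
    (C : ℝ) (hC : 0 < C)
    (hFS : ∀ f : ℕ → ℝ → ℝ, (∀ j, Measurable (f j)) →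
      (∫⁻ t, (∑' j, hlMax (f j) t ^ r) ^ (p / r)) ^ (1 / p)
        ≤ ENNReal.ofReal C * (∫⁻ t, (∑' j, ENNReal.ofReal |f j t| ^ r) ^ (p / r)) ^ (1 / p))
    {X : Type*} [MeasurableSpace X] (μ : Measure X) [IsProbabilityMeasure μ]
    (τ : X → X) (hτ : Ergodic τ μ)
    (f : ℕ → X → ℝ) (hf : ∀ j, Measurable (f j)) :
    (∫⁻ x, (∑' j, ergMax τ (f j) x ^ r) ^ (p / r) ∂μ) ^ (1 / p)
      ≤ ENNReal.ofReal C *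
        (∫⁻ x, (∑' j, ENNReal.ofReal |f j x| ^ r) ^ (p / r) ∂μ) ^ (1 / p) := by
  have hτm : Measurable τ := hτ.toMeasurePreserving.measurable
  have hr0 : (0:ℝ) < r := zero_lt_one.trans hr
  have hp0 : (0:ℝ) < p := zero_lt_one.trans hp
  have hpr : (0:ℝ) < p / r := div_pos hp0 hr0
  set H : X → ℝ≥0∞ := fun x => (∑' j, ENNReal.ofReal |f j x| ^ r) ^ (p / r) with hHdef
  set G : ℕ → X → ℝ≥0∞ := fun m x => (∑' j, eTr τ (f j) m x ^ r) ^ (p / r) with hGdef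
  have hHmeas : Measurable H :=
    Measurable.pow_const (Measurable.ennreal_tsum fun j =>
      Measurable.pow_const (ENNReal.measurable_ofReal.comp (hf j).abs) r) _
  have hGmeas : ∀ m, Measurable (G m) := fun m =>
    Measurable.pow_const (Measurable.ennreal_tsum fun j =>
      Measurable.pow_const (eTr_measurable hτm (hf j) m) r) _
  have hpoint : ∀ (N m : ℕ) (x : X),
      ∑ k ∈ Finset.range (N - m), G m (τ^[k] x)
        ≤ ENNReal.ofReal C ^ p * ∑ k ∈ Finset.range N, H (τ^[k] x) := by
    intro N m x
    have hrhs : (∫⁻ t, (∑' j, ENNReal.ofReal |gFun τ (f j) N x t| ^ r) ^ (p / r))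
        = ∑ k ∈ Finset.range N, H (τ^[k] x) := by
      have hptw : ∀ t : ℝ, (∑' j, ENNReal.ofReal |gFun τ (f j) N x t| ^ r) ^ (p / r)
          = ∑ k ∈ Finset.range N, (indI k).indicator (fun _ => H (τ^[k] x)) t := by
        intro t
        by_cases hmem : 0 ≤ t ∧ t < (N : ℝ)
        · have htk : t ∈ indI ⌊t⌋₊ := mem_indI_floor hmem.1
          have hkN : ⌊t⌋₊ < N := (Nat.floor_lt hmem.1).mpr hmem.2
          have hgv : ∀ j : ℕ, ENNReal.ofReal |gFun τ (f j) N x t| ^ r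
              = ENNReal.ofReal |f j (τ^[⌊t⌋₊] x)| ^ r := fun j => by
            rw [gFun_val τ (f j) x htk hkN]
          rw [tsum_congr hgv,
            Finset.sum_eq_single_of_mem ⌊t⌋₊ (Finset.mem_range.mpr hkN)
              (fun b _ hbk => Set.indicator_of_notMem
                (fun hb => hbk (indI_unique hb htk)) _),
            Set.indicator_of_mem htk]
        · have hnot : t ∉ Set.Ico (0:ℝ) (N:ℝ) := by rw [Set.mem_Ico]; exact hmem
          have hz : ∀ j : ℕ, ENNReal.ofReal |gFun τ (f j) N x t| ^ r = 0 := fun j => by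
            rw [gFun_zero τ (f j) x hnot, abs_zero, ENNReal.ofReal_zero,
              ENNReal.zero_rpow_of_pos hr0]
          have hR : ∑ k ∈ Finset.range N, (indI k).indicator
              (fun _ => H (τ^[k] x)) t = 0 := by
            refine Finset.sum_eq_zero fun k hk => Set.indicator_of_notMem ?_ _
            intro htk
            refine hmem ⟨le_trans (by positivity) htk.1, lt_of_lt_of_le htk.2 ?_⟩
            exact_mod_cast Nat.succ_le_of_lt (Finset.mem_range.mp hk)
          rw [tsum_congr hz, tsum_zero, ENNReal.zero_rpow_of_pos hpr, hR]
      rw [lintegral_congr hptw, sum_indicator_lintegral']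
    have hlhs : ∑ k ∈ Finset.range (N - m), G m (τ^[k] x)
        ≤ ∫⁻ t, (∑' j, hlMax (gFun τ (f j) N x) t ^ r) ^ (p / r) := by
      have hptw : ∀ t : ℝ, ∑ k ∈ Finset.range (N - m),
          (indI k).indicator (fun _ => G m (τ^[k] x)) t
            ≤ (∑' j, hlMax (gFun τ (f j) N x) t ^ r) ^ (p / r) := by
        intro t
        refine indSum_le' (fun k => G m (τ^[k] x))
          (fun t => (∑' j, hlMax (gFun τ (f j) N x) t ^ r) ^ (p / r)) ?_ t
        intro k hkr t' ht'
        have hkNm : k < N - m := Finset.mem_range.mp hkr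
        refine ENNReal.rpow_le_rpow (ENNReal.tsum_le_tsum fun j =>
          ENNReal.rpow_le_rpow ?_ hr0.le) hpr.le
        refine iSup₂_le fun n hn => avg_le_hlMax τ (f j) x ?_ ht'
        have := Finset.mem_range.mp hn; omega
      calc ∑ k ∈ Finset.range (N - m), G m (τ^[k] x)
          = ∫⁻ t, ∑ k ∈ Finset.range (N - m),
              (indI k).indicator (fun _ => G m (τ^[k] x)) t :=
            (sum_indicator_lintegral' _).symm
        _ ≤ _ := lintegral_mono hptw
    have h3 := hFS (fun j => gFun τ (f j) N x) (fun j => gFun_measurable τ (f j) N x)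
    have h4 := rpow_root_le hp0 h3
    rw [hrhs] at h4
    exact le_trans hlhs h4
  have hkey : ∀ (N m : ℕ), ((N - m : ℕ) : ℝ≥0∞) * ∫⁻ x, G m x ∂μ
      ≤ (ENNReal.ofReal C ^ p * ∫⁻ x, H x ∂μ) * N := by
    intro N m
    have hint := lintegral_mono (fun x => hpoint N m x) (μ := μ)
    have hGk : ∀ k : ℕ, ∫⁻ x, G m (τ^[k] x) ∂μ = ∫⁻ x, G m x ∂μ := fun k =>
      (hτ.toMeasurePreserving.iterate k).lintegral_comp (hGmeas m)
    have hHk : ∀ k : ℕ, ∫⁻ x, H (τ^[k] x) ∂μ = ∫⁻ x, H x ∂μ := fun k =>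
      (hτ.toMeasurePreserving.iterate k).lintegral_comp hHmeas
    have hL : ∫⁻ a, ∑ k ∈ Finset.range (N - m), G m (τ^[k] a) ∂μ
        = ((N - m : ℕ) : ℝ≥0∞) * ∫⁻ x, G m x ∂μ := by
      rw [lintegral_finset_sum (Finset.range (N - m)) (f := fun k x => G m (τ^[k] x))
        (fun k _ => (hGmeas m).comp (hτm.iterate k))]
      simp only [hGk, Finset.sum_const, Finset.card_range, nsmul_eq_mul]
    have hR : ∫⁻ a, ENNReal.ofReal C ^ p * ∑ k ∈ Finset.range N, H (τ^[k] a) ∂μ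
        = ENNReal.ofReal C ^ p * ((N : ℝ≥0∞) * ∫⁻ x, H x ∂μ) := by
      rw [lintegral_const_mul _ (Finset.measurable_sum _
        (fun k _ => (show Measurable fun x => H (τ^[k] x) from hHmeas.comp (hτm.iterate k)))),
        lintegral_finset_sum (Finset.range N) (f := fun k x => H (τ^[k] x))
        (fun k _ => hHmeas.comp (hτm.iterate k))]
      simp only [hHk, Finset.sum_const, Finset.card_range, nsmul_eq_mul]
    rw [hL, hR] at hint
    calc ((N - m : ℕ) : ℝ≥0∞) * ∫⁻ x, G m x ∂μ
        ≤ ENNReal.ofReal C ^ p * ((N : ℝ≥0∞) * ∫⁻ x, H x ∂μ) := hint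
      _ = (ENNReal.ofReal C ^ p * ∫⁻ x, H x ∂μ) * N := by ring
  set I := ∫⁻ x, H x ∂μ with hIdef
  have hmonoG : Monotone G := by
    intro a b hab x
    exact ENNReal.rpow_le_rpow (ENNReal.tsum_le_tsum fun j =>
      ENNReal.rpow_le_rpow (eTr_mono τ (f j) x hab) hr0.le) hpr.le
  have hGsup : ∀ x, ⨆ m, G m x = (∑' j, ergMax τ (f j) x ^ r) ^ (p / r) := by
    intro x
    have hmono2 : Monotone fun m => ∑' j, eTr τ (f j) m x ^ r := fun a b hab =>
      ENNReal.tsum_le_tsum fun j => ENNReal.rpow_le_rpow (eTr_mono τ (f j) x hab) hr0.le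
    calc ⨆ m, G m x = (⨆ m, ∑' j, eTr τ (f j) m x ^ r) ^ (p / r) :=
        (iSup_rpow_mono _ hmono2 hpr).symm
      _ = (∑' j, ⨆ m, eTr τ (f j) m x ^ r) ^ (p / r) := by
          rw [tsum_iSup_mono _ (fun j a b hab =>
            ENNReal.rpow_le_rpow (eTr_mono τ (f j) x hab) hr0.le)]
      _ = (∑' j, ergMax τ (f j) x ^ r) ^ (p / r) := by
          refine congrArg (· ^ (p / r)) (tsum_congr fun j => ?_)
          rw [← iSup_rpow_mono _ (eTr_mono τ (f j) x) hr0, iSup_eTr]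
  have hMCT : ∫⁻ x, (∑' j, ergMax τ (f j) x ^ r) ^ (p / r) ∂μ = ⨆ m, ∫⁻ x, G m x ∂μ := by
    rw [← lintegral_iSup hGmeas (fun a b hab x => hmonoG hab x)]
    exact lintegral_congr fun x => (hGsup x).symm
  rcases eq_or_ne I ∞ with hI | hI
  · rw [hI, ENNReal.top_rpow_of_pos (by positivity : (0:ℝ) < 1/p),
      ENNReal.mul_top (ENNReal.ofReal_pos.mpr hC).ne']
    exact le_top
  · have hK : ENNReal.ofReal C ^ p * I ≠ ∞ :=
      ENNReal.mul_ne_top (ENNReal.rpow_ne_top_of_nonneg hp0.le ENNReal.ofReal_ne_top) hI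
    have hGm_le : ∀ m, ∫⁻ x, G m x ∂μ ≤ ENNReal.ofReal C ^ p * I := fun m =>
      le_of_mul_le_mul_nat hK (fun N => hkey N m)
    have hfinal : ∫⁻ x, (∑' j, ergMax τ (f j) x ^ r) ^ (p / r) ∂μ
        ≤ ENNReal.ofReal C ^ p * I := by
      rw [hMCT]; exact iSup_le hGm_le
    calc (∫⁻ x, (∑' j, ergMax τ (f j) x ^ r) ^ (p / r) ∂μ) ^ (1 / p)
        ≤ (ENNReal.ofReal C ^ p * I) ^ (1 / p) :=
          ENNReal.rpow_le_rpow hfinal (by positivity)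
      _ = ENNReal.ofReal C * I ^ (1 / p) := by
          rw [ENNReal.mul_rpow_of_nonneg _ _ (by positivity), ← ENNReal.rpow_mul,
            mul_one_div_cancel hp0.ne', ENNReal.rpow_one]
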